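/- Let n ≥ 1, let q ∈ ℂ, and let U, V be skew-diagonal n×n complex matrices with anti-diagonal entries u_i := u_{i,n+1−i}, v^i := v^{i,n+1−i}; set z_i := (1+q)·u_i·v^i. Let G be the Gram matrix of the canonical pairing attached to q, U, V. Then (det G)² = ∏_{i=1}^{n} (q − z_i)² · ∏_{(i,j) ∈ I(n)} (q² − z_{n+1−i}·z_j), where I(n) := {(i,j) : 1 ≤ i, j ≤ n, i + j ≠ n+1}. -/
import Mathlib


open Matrix

/-- The Gram matrix of the canonical pairing attached to `q`, `U`, `V`: the
`n² × n²` matrix whose entry at row `(i,j)` and column `(k,l)` is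
`S_{ki}^{jl} = q·δ_k^j·δ_i^l − (1+q)·u_{ki}·v^{jl}`, where `S` is the TL-type
operator attached to `q`, `U`, `V`. -/
def gramTL (n : ℕ) (q : ℂ) (U V : Matrix (Fin n) (Fin n) ℂ) :
    Matrix (Fin n × Fin n) (Fin n × Fin n) ℂ :=
  fun p r =>
    q * (if r.1 = p.2 then 1 else 0) * (if p.1 = r.2 then 1 else 0)
      - (1 + q) * U r.1 p.1 * V p.2 r.2

/-- The involution `(i,j) ↦ (rev j, rev i)` on `Fin n × Fin n`. -/
def swapRev (n : ℕ) : Equiv.Perm (Fin n × Fin n) where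
  toFun p := (p.2.rev, p.1.rev)
  invFun p := (p.2.rev, p.1.rev)
  left_inv p := by simp
  right_inv p := by simp

@[simp] lemma swapRev_apply (n : ℕ) (p : Fin n × Fin n) :
    swapRev n p = (p.2.rev, p.1.rev) := rfl

lemma detsq_invol {α : Type*} [Fintype α] [DecidableEq α]
    (τ : Equiv.Perm α) (hτ : ∀ p, τ (τ p) = p)
    (q : ℂ) (b ε : α → ℂ)
    (hε1 : ∀ p, ε p * ε p = 1)
    (hε2 : ∀ p, τ p ≠ p → ε p * ε (τ p) = -1)
    (M : Matrix α α ℂ)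
    (hM : ∀ p r, M p r = (if r = p then q else 0) + (if r = τ p then b p else 0)) :
    M.det ^ 2 = ∏ p, (if τ p = p then (q + b p) ^ 2 else q ^ 2 - b p * b (τ p)) := by
  set c : α → ℂ := fun p => if τ p = p then b p else -b p with hc
  set N : Matrix α α ℂ :=
    Matrix.of (fun p r => (if r = p then q else 0) + (if r = τ p then c p else 0)) with hN
  have hNapp : ∀ p r, N p r = (if r = p then q else 0) + (if r = τ p then c p else 0) :=
    fun p r => rfl
  have hMN : M * N = Matrix.diagonal
      (fun p => if τ p = p then (q + b p) ^ 2 else q ^ 2 - b p * b (τ p)) := by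
    ext p r
    rw [Matrix.mul_apply]
    have hrow : ∀ s, M p s * N s r =
        (if s = p then q * N p r else 0) + (if s = τ p then b p * N (τ p) r else 0) := by
      intro s
      rw [hM]
      by_cases h1 : s = p
      · by_cases h2 : s = τ p
        · have h3 : τ p = p := h2.symm.trans h1
          rw [if_pos h1, if_pos h2, if_pos h1, if_pos h2, h3, h1]; ring
        · rw [if_pos h1, if_neg h2, if_pos h1, if_neg h2, h1]; ring
      · by_cases h2 : s = τ p
        · rw [if_neg h1, if_pos h2, if_neg h1, if_pos h2, h2]; ring
        · rw [if_neg h1, if_neg h2, if_neg h1, if_neg h2]; ring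
    rw [Finset.sum_congr rfl (fun s _ => hrow s), Finset.sum_add_distrib,
      Finset.sum_ite_eq' Finset.univ p, Finset.sum_ite_eq' Finset.univ (τ p)]
    simp only [Finset.mem_univ, if_true]
    rw [hNapp, hNapp, Matrix.diagonal_apply, hτ p]
    simp only [hc]
    rw [hτ p]
    by_cases hfix : τ p = p
    · rw [if_pos hfix, if_pos hfix.symm, if_pos hfix, hfix]
      by_cases hrp : r = p
      · rw [if_pos hrp, if_pos hrp, if_pos hrp.symm]; ring
      · rw [if_neg hrp, if_neg hrp, if_neg (fun h : p = r => hrp h.symm)]; ring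
    · have hfix' : ¬ p = τ p := fun h => hfix h.symm
      rw [if_neg hfix, if_neg hfix', if_neg hfix]
      by_cases hrp : r = p
      · have hrt : ¬ r = τ p := fun h => hfix (h.symm.trans hrp)
        rw [if_pos hrp, if_neg hrt, if_neg hrt, if_pos hrp, if_pos hrp.symm]; ring
      · by_cases hrt : r = τ p
        · rw [if_neg hrp, if_pos hrt, if_pos hrt, if_neg hrp,
            if_neg (fun h : p = r => hrp h.symm)]; ring
        · rw [if_neg hrp, if_neg hrt, if_neg hrt, if_neg hrp,
            if_neg (fun h : p = r => hrp h.symm)]; ring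
  have hNT : N.transpose = (Matrix.diagonal ε) * (M.submatrix τ τ) * (Matrix.diagonal ε) := by
    ext p r
    rw [Matrix.mul_diagonal, Matrix.diagonal_mul, Matrix.transpose_apply,
      Matrix.submatrix_apply, hNapp, hM, hτ p]
    have c1 : (p = r) ↔ (r = p) := eq_comm
    have c2 : (p = τ r) ↔ (r = τ p) := ⟨fun h => by rw [h, hτ], fun h => by rw [h, hτ]⟩
    have c3 : (τ r = τ p) ↔ (r = p) := τ.injective.eq_iff
    have c4 : (τ r = p) ↔ (r = τ p) := ⟨fun h => by rw [← h, hτ], fun h => by rw [h, hτ]⟩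
    simp only [c1, c2, c3, c4]
    by_cases h1 : r = p
    · by_cases h2 : r = τ p
      · have hfix : τ p = p := h2.symm.trans h1
        have hcr : c r = b p := by
          simp only [hc]; rw [h1, if_pos hfix]
        rw [if_pos h1, if_pos h2, if_pos h2, hcr, h1, hfix,
          show ε p * (q + b p) * ε p = (ε p * ε p) * (q + b p) by ring, hε1 p, one_mul]
      · have hcr0 : (if r = τ p then c r else 0) = 0 := if_neg h2
        rw [if_pos h1, if_neg h2, if_neg h2, h1,
          show ε p * (q + 0) * ε p = (ε p * ε p) * q + 0 by ring, hε1 p, one_mul]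
    · by_cases h2 : r = τ p
      · have hfix : ¬ τ p = p := fun h => h1 (h2.trans h)
        have hcr : c r = -b (τ p) := by
          simp only [hc]; rw [h2, hτ p, if_neg (fun h : p = τ p => hfix h.symm)]
        rw [if_neg h1, if_pos h2, if_pos h2, hcr, h2,
          show ε p * (0 + b (τ p)) * ε (τ p) = (ε p * ε (τ p)) * b (τ p) by ring,
          hε2 p hfix]
        ring
      · rw [if_neg h1, if_neg h2, if_neg h2]; ring
  have hdetN : N.det = M.det := by
    have h1 : N.det = N.transpose.det := (Matrix.det_transpose N).symm
    rw [h1, hNT, Matrix.det_mul, Matrix.det_mul, Matrix.det_diagonal,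
      Matrix.det_submatrix_equiv_self]
    rw [show (∏ p, ε p) * M.det * (∏ p, ε p) = ((∏ p, ε p) * (∏ p, ε p)) * M.det by ring,
      ← Finset.prod_mul_distrib]
    simp [hε1]
  calc M.det ^ 2 = (M * N).det := by rw [Matrix.det_mul, hdetN, sq]
  _ = _ := by rw [hMN, Matrix.det_diagonal]

/-- Proposition 4: for skew-diagonal `U`, `V` with anti-diagonal
entries `u_i := U i (rev i)`, `v^i := V i (rev i)` and `z_i := (1+q)·u_i·v^i`,
the Gram matrix `G` of the canonical pairing satisfies
`(det G)² = ∏_i (q − z_i)² · ∏_{(i,j) : i+j ≠ n+1} (q² − z_{n+1−i}·z_j)`. -/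
theorem gram_det_squared (n : ℕ) (q : ℂ) (U V : Matrix (Fin n) (Fin n) ℂ)
    (hU0 : ∀ i j : Fin n, j ≠ i.rev → U i j = 0)
    (hV0 : ∀ i j : Fin n, j ≠ i.rev → V i j = 0)
    (z : Fin n → ℂ) (hz : ∀ i : Fin n, z i = (1 + q) * U i i.rev * V i i.rev) :
    (gramTL n q U V).det ^ 2 =
      (∏ i : Fin n, (q - z i) ^ 2) *
        ∏ p ∈ Finset.univ.filter (fun p : Fin n × Fin n => p.2 ≠ p.1.rev),
          (q ^ 2 - z p.1.rev * z p.2) := by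
  classical
  set σ : Equiv.Perm (Fin n × Fin n) := Equiv.prodComm (Fin n) (Fin n) with hσ
  set τ : Equiv.Perm (Fin n × Fin n) := swapRev n with hτdef
  have hτ : ∀ p, τ (τ p) = p := fun p => by simp [hτdef]
  set b : Fin n × Fin n → ℂ := fun p => -((1 + q) * U p.1.rev p.1 * V p.2 p.2.rev) with hb
  set ε : Fin n × Fin n → ℂ :=
    fun p => if (p.1 : ℕ) + (p.2 : ℕ) + 1 < n then 1 else -1 with hε
  set M : Matrix (Fin n × Fin n) (Fin n × Fin n) ℂ := (gramTL n q U V).submatrix id σ with hMdef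
  have hε1 : ∀ p, ε p * ε p = 1 := by
    intro p; simp only [hε]; split_ifs <;> norm_num
  have hε2 : ∀ p, τ p ≠ p → ε p * ε (τ p) = -1 := by
    intro p hne
    have h1 : (p.1 : ℕ) < n := p.1.isLt
    have h2 : (p.2 : ℕ) < n := p.2.isLt
    have hne' : (p.1 : ℕ) + (p.2 : ℕ) + 1 ≠ n := by
      intro h
      apply hne
      have e1 : p.2.rev = p.1 := by
        apply Fin.ext; rw [Fin.val_rev]; omega
      have e2 : p.1.rev = p.2 := by
        apply Fin.ext; rw [Fin.val_rev]; omega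
      rw [hτdef, swapRev_apply, e1, e2]
    simp only [hε, hτdef, swapRev_apply, Fin.val_rev]
    split_ifs <;> first | (exfalso; omega) | norm_num
  have hM : ∀ p r, M p r = (if r = p then q else 0) + (if r = τ p then b p else 0) := by
    intro p r
    have hMpr : M p r = q * (if r.2 = p.2 then 1 else 0) * (if p.1 = r.1 then 1 else 0)
        - (1 + q) * U r.2 p.1 * V p.2 r.1 := rfl
    rw [hMpr]
    by_cases h2 : r = τ p
    · rw [if_pos h2]
      have hr1 : r.1 = p.2.rev := by rw [h2, hτdef, swapRev_apply]
      have hr2 : r.2 = p.1.rev := by rw [h2, hτdef, swapRev_apply]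
      rw [hr1, hr2]
      by_cases hfix : p.2 = p.1.rev
      · have e1 : p.1.rev = p.2 := hfix.symm
        have e2 : p.1 = p.2.rev := by rw [hfix, Fin.rev_rev]
        have e3 : r = p := by
          rw [h2, hτdef, swapRev_apply, hfix, Fin.rev_rev]
          exact Prod.ext_iff.mpr ⟨rfl, hfix.symm⟩
        rw [if_pos e1, if_pos e2, if_pos e3]
        simp only [hb]; ring
      · have e1 : ¬ p.1.rev = p.2 := fun h => hfix h.symm
        have e2 : ¬ p.1 = p.2.rev := fun h => hfix (by rw [h, Fin.rev_rev])
        have e3 : ¬ r = p := by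
          intro h
          apply hfix
          have : p.2.rev = p.1 := by
            have := congrArg Prod.fst (h.symm.trans h2)
            rw [hτdef, swapRev_apply] at this
            exact this.symm
          rw [← this, Fin.rev_rev]
        rw [if_neg e1, if_neg e2, if_neg e3]
        simp only [hb]; ring
    · rw [if_neg h2]
      have hzero : (1 + q) * U r.2 p.1 * V p.2 r.1 = 0 := by
        by_cases ha : r.2 = p.1.rev
        · have hb' : ¬ r.1 = p.2.rev := by
            intro h
            exact h2 (by rw [hτdef, swapRev_apply]; exact Prod.ext_iff.mpr ⟨h, ha⟩)
          rw [hV0 p.2 r.1 hb', mul_zero]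
        · rw [hU0 r.2 p.1 (fun h => ha (by rw [h, Fin.rev_rev])), mul_zero, zero_mul]
      rw [hzero]
      by_cases hrp : r = p
      · rw [hrp, if_pos rfl, if_pos rfl, if_pos rfl]; ring
      · rw [if_neg hrp]
        by_cases ha : r.2 = p.2
        · have hb' : ¬ p.1 = r.1 := by
            intro h
            exact hrp (Prod.ext_iff.mpr ⟨h.symm, ha⟩)
          rw [if_pos ha, if_neg hb']; ring
        · rw [if_neg ha]; ring
  have key := detsq_invol τ hτ q b ε hε1 hε2 M hM
  have hdet2 : M.det ^ 2 = (gramTL n q U V).det ^ 2 := by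
    rw [hMdef, Matrix.det_permute', mul_pow]
    rcases Int.units_eq_one_or (Equiv.Perm.sign σ) with h | h <;> rw [h] <;> norm_num
  rw [← hdet2, key]
  have hfix_iff : ∀ p : Fin n × Fin n, (τ p = p) ↔ (p.2 = p.1.rev) := by
    intro p
    rw [hτdef, swapRev_apply, Prod.ext_iff]
    constructor
    · rintro ⟨h1, h2⟩; exact h2.symm
    · intro h; exact ⟨by rw [h, Fin.rev_rev], h.symm⟩
  rw [Finset.prod_congr rfl
    (fun p _ => if_congr (hfix_iff p) rfl rfl :
      ∀ p ∈ Finset.univ, (if τ p = p then (q + b p) ^ 2 else q ^ 2 - b p * b (τ p)) =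
        (if p.2 = p.1.rev then (q + b p) ^ 2 else q ^ 2 - b p * b (τ p))),
    Finset.prod_ite]
  congr 1
  · refine Finset.prod_bij' (fun p _ => p.1.rev) (fun i _ => (i.rev, i)) ?_ ?_ ?_ ?_ ?_
    · intro a _; exact Finset.mem_univ _
    · intro i _
      exact Finset.mem_filter.mpr ⟨Finset.mem_univ _, (Fin.rev_rev i).symm⟩
    · intro p hp
      have hp2 : p.2 = p.1.rev := (Finset.mem_filter.mp hp).2
      exact Prod.ext_iff.mpr ⟨Fin.rev_rev p.1, hp2.symm⟩
    · intro i _; exact Fin.rev_rev i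
    · intro p hp
      have hp2 : p.2 = p.1.rev := (Finset.mem_filter.mp hp).2
      rw [hz p.1.rev, hb]
      simp only [Fin.rev_rev, hp2]
      ring
  · refine Finset.prod_congr ?_ ?_
    · ext p; simp
    · intro p _
      rw [hz p.1.rev, hz p.2, hb, hτdef]
      simp only [swapRev_apply, Fin.rev_rev]
      ring
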